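/- Asymptotic variance of the quadratic variation of fractional Brownian motion, critical case H = 3/4. Let ρ(r) = (1/2)(|r+1|^{3/2} + |r−1|^{3/2} − 2|r|^{3/2}) for r ∈ ℤ, and set σ_n² = 2 Σ_{|r|<n} (n − |r|) ρ(r)² for n ≥ 1. Then σ_n²/(n log n) → 9/16 as n → ∞. -/

import Mathlib

open Filter Real Finset

/-- The covariance function of the unit increments of fractional Brownian motion
with Hurst parameter `H = 3/4`:
`ρ(r) = (1/2)(|r+1|^{3/2} + |r−1|^{3/2} − 2|r|^{3/2})`. -/
noncomputable def fbmRho34 (r : ℤ) : ℝ :=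
  (1 / 2) * (|(r : ℝ) + 1| ^ ((3 : ℝ) / 2) + |(r : ℝ) - 1| ^ ((3 : ℝ) / 2) -
    2 * |(r : ℝ)| ^ ((3 : ℝ) / 2))

namespace FbmAux

/-! ### Pointwise bounds on `fbmRho34` via the mean value theorem -/

lemma hasDerivAt_h (x : ℝ) :
    HasDerivAt (fun y : ℝ => (y + 1) ^ ((3:ℝ)/2) - y ^ ((3:ℝ)/2))
      ((3/2) * (x+1) ^ ((1:ℝ)/2) - (3/2) * x ^ ((1:ℝ)/2)) x := by
  have h1 : HasDerivAt (fun y : ℝ => (y + 1) ^ ((3:ℝ)/2))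
      ((3/2) * (x+1) ^ ((1:ℝ)/2)) x := by
    have := (Real.hasDerivAt_rpow_const (x := x + 1) (p := (3:ℝ)/2)
      (Or.inr (by norm_num))).comp x ((hasDerivAt_id x).add_const 1)
    exact this.congr_deriv (by norm_num)
  have h2 : HasDerivAt (fun y : ℝ => y ^ ((3:ℝ)/2)) ((3/2) * x ^ ((1:ℝ)/2)) x := by
    have := Real.hasDerivAt_rpow_const (x := x) (p := (3:ℝ)/2) (Or.inr (by norm_num))
    convert this using 1
    norm_num
  exact h1.sub h2

lemma rpow_half (x : ℝ) : x ^ ((1:ℝ)/2) = Real.sqrt x := by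
  rw [Real.sqrt_eq_rpow]

lemma sqrt_diff (x : ℝ) (hx : 0 ≤ x) :
    Real.sqrt (x+1) - Real.sqrt x = 1 / (Real.sqrt (x+1) + Real.sqrt x) := by
  have h1 : (0:ℝ) < Real.sqrt (x+1) := Real.sqrt_pos.mpr (by linarith)
  have h2 : (0:ℝ) ≤ Real.sqrt x := Real.sqrt_nonneg x
  have key : (Real.sqrt (x+1) - Real.sqrt x) * (Real.sqrt (x+1) + Real.sqrt x) = 1 := by
    have e1 : Real.sqrt (x+1) * Real.sqrt (x+1) = x + 1 := Real.mul_self_sqrt (by linarith)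
    have e2 : Real.sqrt x * Real.sqrt x = x := Real.mul_self_sqrt hx
    linear_combination e1 - e2
  rw [eq_div_iff (ne_of_gt (by linarith : (0:ℝ) < Real.sqrt (x+1) + Real.sqrt x))]
  exact key

lemma rho_bounds (r : ℕ) (hr : 1 ≤ r) :
    3 / (4 * (Real.sqrt (r+1) + Real.sqrt r)) ≤ fbmRho34 r ∧
    fbmRho34 r ≤ 3 / (4 * (Real.sqrt r + Real.sqrt ((r:ℝ)-1))) := by
  have hr1 : (1:ℝ) ≤ (r:ℝ) := by exact_mod_cast hr
  set h : ℝ → ℝ := fun y => (y + 1) ^ ((3:ℝ)/2) - y ^ ((3:ℝ)/2) with hh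
  have hab : (r:ℝ) - 1 < r := by linarith
  have hcont : ContinuousOn h (Set.Icc ((r:ℝ)-1) r) := by
    apply ContinuousOn.sub
    · exact ((continuous_id.add continuous_const).continuousOn).rpow_const
        (fun x _ => Or.inr (by norm_num))
    · exact (continuous_id.continuousOn).rpow_const (fun x _ => Or.inr (by norm_num))
  obtain ⟨c, hc, hceq⟩ := exists_hasDerivAt_eq_slope h
      (fun x => (3/2) * (x+1) ^ ((1:ℝ)/2) - (3/2) * x ^ ((1:ℝ)/2))
      hab hcont (fun x _ => hasDerivAt_h x)
  have hc0 : 0 ≤ c := le_of_lt (lt_of_le_of_lt (by linarith : (0:ℝ) ≤ (r:ℝ)-1) hc.1)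
  have hrho : fbmRho34 r = (1/2) * ((3/2) * (c+1) ^ ((1:ℝ)/2) - (3/2) * c ^ ((1:ℝ)/2)) := by
    have hslope : (h (r:ℝ) - h ((r:ℝ)-1)) / ((r:ℝ) - ((r:ℝ)-1))
        = h (r:ℝ) - h ((r:ℝ)-1) := by
      rw [show (r:ℝ) - ((r:ℝ)-1) = 1 by ring, div_one]
    rw [hceq, hslope]
    simp only [hh]
    have a1 : |(r:ℝ) + 1| = (r:ℝ) + 1 := abs_of_nonneg (by linarith)
    have a2 : |(r:ℝ) - 1| = (r:ℝ) - 1 := abs_of_nonneg (by linarith)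
    have a3 : |(r:ℝ)| = (r:ℝ) := abs_of_nonneg (by linarith)
    rw [fbmRho34]
    push_cast
    rw [a1, a2, a3]
    rw [show (r:ℝ) - 1 + 1 = (r:ℝ) by ring]
    ring
  rw [hrho, rpow_half, rpow_half,
    show (1:ℝ)/2 * ((3:ℝ)/2 * Real.sqrt (c+1) - 3/2 * Real.sqrt c)
      = (3/4) * (Real.sqrt (c+1) - Real.sqrt c) by ring,
    sqrt_diff c hc0]
  have hd1 : (0:ℝ) < Real.sqrt (c+1) + Real.sqrt c := by
    have := Real.sqrt_pos.mpr (show (0:ℝ) < c + 1 by linarith)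
    have := Real.sqrt_nonneg c
    linarith
  have hd2 : (0:ℝ) < Real.sqrt ((r:ℝ)) + Real.sqrt ((r:ℝ)-1) := by
    have := Real.sqrt_pos.mpr (show (0:ℝ) < (r:ℝ) by linarith)
    have := Real.sqrt_nonneg ((r:ℝ)-1)
    linarith
  have hd3 : (0:ℝ) < Real.sqrt ((r:ℝ)+1) + Real.sqrt (r:ℝ) := by
    have := Real.sqrt_pos.mpr (show (0:ℝ) < (r:ℝ)+1 by linarith)
    have := Real.sqrt_nonneg (r:ℝ)
    linarith
  constructor
  · have m1 : Real.sqrt (c+1) ≤ Real.sqrt ((r:ℝ)+1) := Real.sqrt_le_sqrt (by linarith [hc.2])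
    have m2 : Real.sqrt c ≤ Real.sqrt (r:ℝ) := Real.sqrt_le_sqrt (by linarith [hc.2])
    rw [show (3:ℝ)/4 * (1 / (Real.sqrt (c+1) + Real.sqrt c))
      = 3 / (4 * (Real.sqrt (c+1) + Real.sqrt c)) by rw [div_mul_div_comm]; norm_num]
    gcongr
  · have m1 : Real.sqrt (r:ℝ) ≤ Real.sqrt (c+1) := Real.sqrt_le_sqrt (by linarith [hc.1])
    have m2 : Real.sqrt ((r:ℝ)-1) ≤ Real.sqrt c := Real.sqrt_le_sqrt (by linarith [hc.1])
    rw [show (3:ℝ)/4 * (1 / (Real.sqrt (c+1) + Real.sqrt c))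
      = 3 / (4 * (Real.sqrt (c+1) + Real.sqrt c)) by rw [div_mul_div_comm]; norm_num]
    gcongr

/-! ### Bounds on the squared covariances -/

noncomputable def a (r : ℕ) : ℝ := (fbmRho34 r)^2

lemma a_bounds (r : ℕ) (hr : 1 ≤ r) :
    9 / (16 * (4*(r:ℝ)+2)) ≤ a r ∧ a r ≤ 9 / (16 * (4*(r:ℝ)-3)) := by
  have hr1 : (1:ℝ) ≤ (r:ℝ) := by exact_mod_cast hr
  obtain ⟨hl, hu⟩ := rho_bounds r hr
  have s1 : (0:ℝ) < Real.sqrt ((r:ℝ)+1) := Real.sqrt_pos.mpr (by linarith)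
  have s2 : (0:ℝ) < Real.sqrt (r:ℝ) := Real.sqrt_pos.mpr (by linarith)
  have s3 : (0:ℝ) ≤ Real.sqrt ((r:ℝ)-1) := Real.sqrt_nonneg _
  have sq1 : Real.sqrt ((r:ℝ)+1) ^ 2 = (r:ℝ)+1 := Real.sq_sqrt (by linarith)
  have sq2 : Real.sqrt (r:ℝ) ^ 2 = (r:ℝ) := Real.sq_sqrt (by linarith)
  have sq3 : Real.sqrt ((r:ℝ)-1) ^ 2 = (r:ℝ)-1 := Real.sq_sqrt (by linarith)
  have hs : (Real.sqrt ((r:ℝ)+1) + Real.sqrt (r:ℝ))^2 ≤ 4*(r:ℝ)+2 := by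
    nlinarith [sq_nonneg (Real.sqrt ((r:ℝ)+1) - Real.sqrt (r:ℝ))]
  have ht : 4*(r:ℝ)-3 ≤ (Real.sqrt (r:ℝ) + Real.sqrt ((r:ℝ)-1))^2 := by
    have : Real.sqrt ((r:ℝ)-1) ≤ Real.sqrt (r:ℝ) := Real.sqrt_le_sqrt (by linarith)
    nlinarith [mul_le_mul_of_nonneg_left this s3]
  constructor
  · have h1 : (3 / (4 * (Real.sqrt ((r:ℝ)+1) + Real.sqrt (r:ℝ))))^2 ≤ a r := by
      apply pow_le_pow_left₀ (by positivity) ?_ 2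
      exact_mod_cast hl
    have h2 : (3 / (4 * (Real.sqrt ((r:ℝ)+1) + Real.sqrt (r:ℝ))))^2
        = 9 / (16 * (Real.sqrt ((r:ℝ)+1) + Real.sqrt (r:ℝ))^2) := by
      rw [div_pow, mul_pow]; norm_num
    rw [h2] at h1
    refine le_trans ?_ h1
    gcongr
  · have h0 : 0 ≤ fbmRho34 (r:ℤ) := le_trans (by positivity) hl
    have h1 : a r ≤ (3 / (4 * (Real.sqrt (r:ℝ) + Real.sqrt ((r:ℝ)-1))))^2 := by
      apply pow_le_pow_left₀ h0 ?_ 2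
      exact_mod_cast hu
    have h2 : (3 / (4 * (Real.sqrt (r:ℝ) + Real.sqrt ((r:ℝ)-1))))^2
        = 9 / (16 * (Real.sqrt (r:ℝ) + Real.sqrt ((r:ℝ)-1))^2) := by
      rw [div_pow, mul_pow]; norm_num
    rw [h2] at h1
    refine le_trans h1 ?_
    gcongr
    linarith

lemma a_err (r : ℕ) (hr : 1 ≤ r) : |a r - 9/(64*(r:ℝ))| ≤ 2/(r:ℝ)^2 := by
  have hr1 : (1:ℝ) ≤ (r:ℝ) := by exact_mod_cast hr
  obtain ⟨hl, hu⟩ := a_bounds r hr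
  set x := (r:ℝ)
  have hx0 : 0 < x := by linarith
  have hd1 : (0:ℝ) < 16*(4*x-3) := by nlinarith
  have hd2 : (0:ℝ) < 16*(4*x+2) := by nlinarith
  rw [abs_le]
  constructor
  · have : 9/(64*x) - 2/x^2 ≤ 9/(16*(4*x+2)) := by
      rw [div_sub_div _ _ (by positivity) (by positivity), div_le_div_iff₀ (by positivity) hd2]
      nlinarith
    linarith
  · have : 9/(16*(4*x-3)) ≤ 9/(64*x) + 2/x^2 := by
      rw [div_add_div _ _ (by positivity) (by positivity), div_le_div_iff₀ hd1 (by positivity)]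
      nlinarith
    linarith

/-! ### Partial sums -/

lemma sum_inv_sq_le' : ∀ m : ℕ, 1 ≤ m → ∑ r ∈ Icc 1 m, (1:ℝ)/(r:ℝ)^2 ≤ 2 - 1/m := by
  intro m hm
  induction m, hm using Nat.le_induction with
  | base => norm_num
  | succ k hk ih =>
    rw [Finset.sum_Icc_succ_top (by omega)]
    have hk1 : (1:ℝ) ≤ (k:ℝ) := by exact_mod_cast hk
    have step : (1:ℝ)/((k:ℝ)+1)^2 ≤ 1/(k:ℝ) - 1/((k:ℝ)+1) := by
      rw [div_sub_div _ _ (by positivity) (by positivity),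
        div_le_div_iff₀ (by positivity) (by positivity)]
      nlinarith
    push_cast
    linarith

lemma sum_err_le (m : ℕ) (hm : 1 ≤ m) :
    |∑ r ∈ Icc 1 m, a r - (9/64) * Real.log m| ≤ 5 := by
  have hH : ((harmonic m : ℝ)) = ∑ r ∈ Icc 1 m, (1:ℝ)/(r:ℝ) := by
    rw [harmonic_eq_sum_Icc]
    push_cast
    simp [one_div]
  have h1 : |∑ r ∈ Icc 1 m, a r - (9/64) * (harmonic m : ℝ)| ≤ 4 := by
    have e1 : ∑ r ∈ Icc 1 m, a r - (9/64) * (harmonic m : ℝ)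
        = ∑ r ∈ Icc 1 m, (a r - 9/(64*(r:ℝ))) := by
      rw [hH, Finset.mul_sum, ← Finset.sum_sub_distrib]
      apply Finset.sum_congr rfl
      intro r hr
      have : (9:ℝ)/64 * (1/(r:ℝ)) = 9/(64*(r:ℝ)) := by
        rw [div_mul_div_comm]; norm_num
      rw [this]
    rw [e1]
    calc |∑ r ∈ Icc 1 m, (a r - 9/(64*(r:ℝ)))| ≤ ∑ r ∈ Icc 1 m, |a r - 9/(64*(r:ℝ))| :=
          Finset.abs_sum_le_sum_abs _ _
      _ ≤ ∑ r ∈ Icc 1 m, 2/(r:ℝ)^2 := by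
          apply Finset.sum_le_sum
          intro r hr
          exact a_err r (Finset.mem_Icc.mp hr).1
      _ = 2 * ∑ r ∈ Icc 1 m, (1:ℝ)/(r:ℝ)^2 := by
          rw [Finset.mul_sum]
          apply Finset.sum_congr rfl
          intro r _
          rw [mul_one_div]
      _ ≤ 4 := by
          have h := sum_inv_sq_le' m hm
          have hm0 : (0:ℝ) < (m:ℝ) := by exact_mod_cast hm
          have : (0:ℝ) < 1/(m:ℝ) := by positivity
          linarith
  have h2 : Real.log m ≤ (harmonic m : ℝ) := by
    refine le_trans ?_ (log_add_one_le_harmonic m)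
    apply Real.log_le_log (by exact_mod_cast hm)
    push_cast; linarith
  have h3 : (harmonic m : ℝ) ≤ 1 + Real.log m := harmonic_le_one_add_log m
  rw [abs_le] at h1 ⊢
  constructor <;> nlinarith [h1.1, h1.2]

lemma weighted_id (k : ℕ) :
    ∑ r ∈ Icc 1 k, (((k:ℝ)+1) - r) * a r = ∑ m ∈ Icc 1 k, ∑ r ∈ Icc 1 m, a r := by
  induction k with
  | zero => simp
  | succ k ih =>
    rw [Finset.sum_Icc_succ_top (Nat.le_add_left 1 k),
      Finset.sum_Icc_succ_top (Nat.le_add_left 1 k)]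
    have expand : ∑ r ∈ Icc 1 k, ((((k+1:ℕ)):ℝ)+1 - r) * a r
        = ∑ r ∈ Icc 1 k, ((((k:ℕ):ℝ)+1 - r) * a r + a r) := by
      apply Finset.sum_congr rfl
      intro r _
      push_cast
      ring
    rw [expand, Finset.sum_add_distrib, ih,
      Finset.sum_Icc_succ_top (Nat.le_add_left 1 k)]
    push_cast
    ring

lemma log_sum_upper (k : ℕ) : ∑ m ∈ Icc 1 k, Real.log m ≤ (k:ℝ) * Real.log k := by
  calc ∑ m ∈ Icc 1 k, Real.log m ≤ ∑ m ∈ Icc 1 k, Real.log k := by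
        apply Finset.sum_le_sum
        intro m hm
        obtain ⟨h1, h2⟩ := Finset.mem_Icc.mp hm
        apply Real.log_le_log (by exact_mod_cast h1)
        exact_mod_cast h2
    _ ≤ (k:ℝ) * Real.log k := by
        rw [Finset.sum_const, Nat.card_Icc]
        simp only [nsmul_eq_mul]
        have hk : ((k + 1 - 1 : ℕ):ℝ) = (k:ℝ) := by push_cast; ring
        rw [hk]

lemma log_sum_lower (k : ℕ) :
    (k:ℝ) * Real.log k - k ≤ ∑ m ∈ Icc 1 k, Real.log m := by
  have tel : ∑ m ∈ range k, (((m+1:ℕ):ℝ) * Real.log (m+1:ℕ) - (m:ℝ) * Real.log m)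
      = (k:ℝ) * Real.log k - 0 * Real.log 0 := by
    simpa using Finset.sum_range_sub (fun m => (m:ℝ) * Real.log m) k
  have step : ∀ m ∈ range k, ((m+1:ℕ):ℝ) * Real.log (m+1:ℕ) - (m:ℝ) * Real.log m
      ≤ Real.log (m+1:ℕ) + 1 := by
    intro m _
    rcases Nat.eq_zero_or_pos m with h0 | h0
    · subst h0; simp
    · have hm1 : (1:ℝ) ≤ (m:ℝ) := by exact_mod_cast h0
      have hlog : Real.log ((m+1:ℕ):ℝ) - Real.log (m:ℝ) ≤ 1/(m:ℝ) := by
        rw [← Real.log_div (by push_cast; linarith) (by linarith)]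
        have := Real.log_le_sub_one_of_pos
          (show (0:ℝ) < ((m+1:ℕ):ℝ)/(m:ℝ) by positivity)
        refine le_trans this ?_
        rw [div_sub_one (by linarith : (m:ℝ) ≠ 0)]
        push_cast
        rw [div_le_div_iff₀ (by linarith) (by linarith)]
        ring_nf
        nlinarith
      have : (m:ℝ) * (Real.log ((m+1:ℕ):ℝ) - Real.log (m:ℝ)) ≤ 1 := by
        calc (m:ℝ) * (Real.log ((m+1:ℕ):ℝ) - Real.log (m:ℝ)) ≤ (m:ℝ) * (1/(m:ℝ)) :=
              mul_le_mul_of_nonneg_left hlog (by linarith)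
          _ = 1 := by field_simp
      push_cast at this ⊢
      linarith
  have sum_le : (k:ℝ) * Real.log k - 0 * Real.log 0 ≤
      ∑ m ∈ range k, (Real.log (m+1:ℕ) + 1) := by
    rw [← tel]
    exact Finset.sum_le_sum step
  have reindex : ∑ m ∈ range k, Real.log ((m+1:ℕ):ℝ) = ∑ m ∈ Icc 1 k, Real.log m := by
    rw [← Finset.Ico_add_one_right_eq_Icc, Finset.sum_Ico_eq_sum_range]
    apply Finset.sum_congr (by norm_num)
    intro m _
    congr 1
    push_cast
    ring
  rw [Finset.sum_add_distrib, Finset.sum_const, reindex] at sum_le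
  simp only [Finset.card_range, nsmul_eq_mul, mul_one] at sum_le
  simp only [Real.log_zero, mul_zero, zero_mul, sub_zero] at sum_le
  linarith

/-! ### Splitting the symmetric sum -/

lemma rho_even (r : ℤ) : fbmRho34 (-r) = fbmRho34 r := by
  unfold fbmRho34
  push_cast
  rw [show -(r:ℝ) + 1 = -((r:ℝ) - 1) by ring, show -(r:ℝ) - 1 = -((r:ℝ) + 1) by ring,
    abs_neg, abs_neg, abs_neg]
  ring

lemma rho_zero : fbmRho34 0 = 1 := by
  unfold fbmRho34
  norm_num

lemma sum_split (n : ℕ) (hn : 1 ≤ n) (f : ℤ → ℝ) (hf : ∀ r, f (-r) = f r) :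
    ∑ r ∈ Ioo (-(n:ℤ)) n, f r = f 0 + 2 * ∑ j ∈ Icc 1 (n-1), f (j:ℤ) := by
  have himg1 : Ioo (0:ℤ) n = Finset.image (fun j : ℕ => (j:ℤ)) (Icc 1 (n-1)) := by
    ext x
    simp only [Finset.mem_Ioo, Finset.mem_image, Finset.mem_Icc]
    constructor
    · intro ⟨h1, h2⟩
      exact ⟨x.toNat, by omega, by omega⟩
    · rintro ⟨j, ⟨h1, h2⟩, rfl⟩
      omega
  have himg2 : Ioo (-(n:ℤ)) 0 = Finset.image (fun j : ℕ => -(j:ℤ)) (Icc 1 (n-1)) := by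
    ext x
    simp only [Finset.mem_Ioo, Finset.mem_image, Finset.mem_Icc]
    constructor
    · intro ⟨h1, h2⟩
      exact ⟨(-x).toNat, by omega, by omega⟩
    · rintro ⟨j, ⟨h1, h2⟩, rfl⟩
      omega
  have hd1 : Disjoint (Ioo (-(n:ℤ)) 0) ({0} ∪ Ioo (0:ℤ) n) := by
    rw [Finset.disjoint_left]
    intro x hx hx'
    simp only [Finset.mem_Ioo, Finset.mem_union, Finset.mem_singleton] at hx hx'
    omega
  have hd2 : Disjoint ({(0:ℤ)} : Finset ℤ) (Ioo (0:ℤ) n) := by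
    rw [Finset.disjoint_left]
    intro x hx hx'
    simp only [Finset.mem_Ioo, Finset.mem_singleton] at hx hx'
    omega
  have hun : Ioo (-(n:ℤ)) n = Ioo (-(n:ℤ)) 0 ∪ ({0} ∪ Ioo (0:ℤ) n) := by
    ext x
    simp only [Finset.mem_Ioo, Finset.mem_union, Finset.mem_singleton]
    omega
  rw [hun, Finset.sum_union hd1, Finset.sum_union hd2, Finset.sum_singleton]
  rw [himg1, himg2, Finset.sum_image (by intro a _ b _ h; simp only at h; omega),
    Finset.sum_image (by intro a _ b _ h; simp only at h; omega)]
  have : ∑ j ∈ Icc 1 (n-1), f (-(j:ℤ)) = ∑ j ∈ Icc 1 (n-1), f (j:ℤ) :=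
    Finset.sum_congr rfl (fun j _ => hf _)
  rw [this]
  ring

lemma main_split (n : ℕ) (hn : 1 ≤ n) :
    ∑ r ∈ Finset.Ioo (-(n : ℤ)) (n : ℤ),
      ((n : ℝ) - |(r : ℝ)|) * (fbmRho34 r) ^ 2
    = (n:ℝ) + 2 * ∑ j ∈ Icc 1 (n-1), ((n:ℝ) - (j:ℝ)) * a j := by
  rw [sum_split n hn _ (by
    intro r
    rw [rho_even]
    push_cast
    rw [abs_neg])]
  rw [rho_zero]
  unfold a
  norm_num

end FbmAux

open FbmAux in
/-- **Asymptotic variance of the quadratic variation of fractional Brownian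
motion, critical case `H = 3/4`.** With
`σ_n² = 2 Σ_{|r|<n} (n − |r|) ρ(r)²`, one has `σ_n²/(n log n) → 9/16`. -/
theorem fbm_quadratic_variation_critical_case :
    Tendsto (fun n : ℕ =>
        (2 * ∑ r ∈ Finset.Ioo (-(n : ℤ)) (n : ℤ),
          ((n : ℝ) - |(r : ℝ)|) * (fbmRho34 r) ^ 2) / ((n : ℝ) * Real.log n))
      atTop (nhds (9 / 16)) := by
  -- notation
  set S : ℕ → ℝ := fun n => ∑ j ∈ Icc 1 (n-1), ((n:ℝ) - (j:ℝ)) * a j with hS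
  set L : ℕ → ℝ := fun n => ∑ m ∈ Icc 1 (n-1), Real.log m with hL
  -- 1/log n → 0
  have hlog0 : Tendsto (fun n : ℕ => 1 / Real.log n) atTop (nhds 0) := by
    apply Tendsto.div_atTop tendsto_const_nhds
    exact Real.tendsto_log_atTop.comp tendsto_natCast_atTop_atTop
  have hnlogpos : ∀ n : ℕ, 3 ≤ n → (0:ℝ) < (n:ℝ) * Real.log n := by
    intro n hn
    have h1 : (1:ℝ) < (n:ℝ) := by exact_mod_cast (by omega : 1 < n)
    have := Real.log_pos h1
    positivity
  -- (n-1)/n → 1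
  have hfrac : Tendsto (fun n : ℕ => ((n:ℝ) - 1) / n) atTop (nhds 1) := by
    have h : Tendsto (fun n : ℕ => 1 - 1/(n:ℝ)) atTop (nhds (1 - 0)) :=
      tendsto_const_nhds.sub tendsto_one_div_atTop_nhds_zero_nat
    rw [sub_zero] at h
    apply Tendsto.congr' ?_ h
    filter_upwards [eventually_ge_atTop 1] with n hn
    have hn0 : (n:ℝ) ≠ 0 := Nat.cast_ne_zero.mpr (by omega)
    field_simp
  -- log(n-1)/log n → 1
  have hlogratio : Tendsto (fun n : ℕ => Real.log ((n:ℝ)-1) / Real.log n)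
      atTop (nhds 1) := by
    have hlow : Tendsto (fun n : ℕ => 1 - 1/Real.log n) atTop (nhds 1) := by
      have := tendsto_const_nhds.sub hlog0 (f := fun _ : ℕ => (1:ℝ))
      rw [sub_zero] at this
      exact this
    apply tendsto_of_tendsto_of_tendsto_of_le_of_le' hlow tendsto_const_nhds
    · filter_upwards [eventually_ge_atTop 3] with n hn
      have h2 : (2:ℝ) ≤ (n:ℝ) := by exact_mod_cast (by omega : 2 ≤ n)
      have hlogn : (0:ℝ) < Real.log n := Real.log_pos (by linarith)
      have hkey : Real.log n - 1 ≤ Real.log ((n:ℝ)-1) := by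
        have hd : Real.log ((n:ℝ)) - Real.log ((n:ℝ)-1) ≤ 1 := by
          rw [← Real.log_div (by linarith) (by linarith)]
          have := Real.log_le_sub_one_of_pos
            (show (0:ℝ) < (n:ℝ)/((n:ℝ)-1) from div_pos (by linarith) (by linarith))
          refine le_trans this ?_
          rw [div_sub_one (by linarith : (n:ℝ)-1 ≠ 0)]
          rw [div_le_one (by linarith)]
          linarith
        linarith
      calc 1 - 1/Real.log n ≤ (Real.log n - 1)/Real.log n := by
            rw [sub_div, div_self (ne_of_gt hlogn)]
        _ ≤ Real.log ((n:ℝ)-1) / Real.log n := by gcongr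
    · filter_upwards [eventually_ge_atTop 3] with n hn
      have h2 : (2:ℝ) ≤ (n:ℝ) := by exact_mod_cast (by omega : 2 ≤ n)
      have hlogn : (0:ℝ) < Real.log n := Real.log_pos (by linarith)
      rw [div_le_one hlogn]
      apply Real.log_le_log (by linarith)
      linarith
  -- ((n-1) log(n-1)) / (n log n) → 1
  have hu : Tendsto (fun n : ℕ => (((n:ℝ)-1) * Real.log ((n:ℝ)-1)) / ((n:ℝ) * Real.log n))
      atTop (nhds 1) := by
    have := hfrac.mul hlogratio
    rw [one_mul] at this
    apply Tendsto.congr ?_ this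
    intro n
    rw [div_mul_div_comm]
  have div_le_div_same' : ∀ {a b c : ℝ}, a ≤ b → 0 < c → a / c ≤ b / c := by
    intro a b c h hc
    rw [div_le_div_iff₀ hc hc]
    exact mul_le_mul_of_nonneg_right h hc.le
  -- L n / (n log n) → 1
  have hLlim : Tendsto (fun n : ℕ => L n / ((n:ℝ) * Real.log n)) atTop (nhds 1) := by
    have hlow : Tendsto (fun n : ℕ =>
        (((n:ℝ)-1) * Real.log ((n:ℝ)-1)) / ((n:ℝ) * Real.log n) - 1/Real.log n)
        atTop (nhds (1 - 0)) := hu.sub hlog0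
    rw [sub_zero] at hlow
    apply tendsto_of_tendsto_of_tendsto_of_le_of_le' hlow hu
    · filter_upwards [eventually_ge_atTop 3] with n hn
      have hpos := hnlogpos n hn
      have hcast : ((n-1:ℕ):ℝ) = (n:ℝ)-1 := Nat.cast_pred (by omega)
      have hlower := FbmAux.log_sum_lower (n-1)
      rw [hcast] at hlower
      have h2 : (2:ℝ) ≤ (n:ℝ) := by exact_mod_cast (by omega : 2 ≤ n)
      have hlogn : (0:ℝ) < Real.log n := Real.log_pos (by linarith)
      have hstep1 : (((n:ℝ)-1) * Real.log ((n:ℝ)-1) - ((n:ℝ)-1)) / ((n:ℝ) * Real.log n)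
          ≤ L n / ((n:ℝ) * Real.log n) := div_le_div_same' hlower hpos
      have hstep2 : ((n:ℝ)-1) / ((n:ℝ) * Real.log n) ≤ 1/Real.log n := by
        rw [div_le_div_iff₀ hpos hlogn]
        nlinarith
      calc (((n:ℝ)-1) * Real.log ((n:ℝ)-1)) / ((n:ℝ) * Real.log n) - 1/Real.log n
          ≤ (((n:ℝ)-1) * Real.log ((n:ℝ)-1)) / ((n:ℝ) * Real.log n)
            - ((n:ℝ)-1) / ((n:ℝ) * Real.log n) := by linarith
        _ = (((n:ℝ)-1) * Real.log ((n:ℝ)-1) - ((n:ℝ)-1)) / ((n:ℝ) * Real.log n) := by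
            ring
        _ ≤ L n / ((n:ℝ) * Real.log n) := hstep1
    · filter_upwards [eventually_ge_atTop 3] with n hn
      have hpos := hnlogpos n hn
      have hcast : ((n-1:ℕ):ℝ) = (n:ℝ)-1 := Nat.cast_pred (by omega)
      have hupper := FbmAux.log_sum_upper (n-1)
      rw [hcast] at hupper
      exact div_le_div_same' hupper hpos
  -- S n / (n log n) → 9/64
  have hSbound : ∀ n : ℕ, 2 ≤ n → |S n - (9/64) * L n| ≤ 5 * (n:ℝ) := by
    intro n hn
    have hcast : ((n-1:ℕ):ℝ) + 1 = (n:ℝ) := by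
      rw [Nat.cast_pred (by omega)]; ring
    have hid : S n = ∑ m ∈ Icc 1 (n-1), ∑ r ∈ Icc 1 m, FbmAux.a r := by
      rw [← FbmAux.weighted_id (n-1)]
      simp only [hS]
      apply Finset.sum_congr rfl
      intro r _
      rw [hcast]
    have : S n - (9/64) * L n
        = ∑ m ∈ Icc 1 (n-1), ((∑ r ∈ Icc 1 m, FbmAux.a r) - (9/64) * Real.log m) := by
      rw [hid]
      simp only [hL]
      rw [Finset.mul_sum, ← Finset.sum_sub_distrib]
    rw [this]
    calc |∑ m ∈ Icc 1 (n-1), ((∑ r ∈ Icc 1 m, FbmAux.a r) - (9/64) * Real.log m)|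
        ≤ ∑ m ∈ Icc 1 (n-1), |(∑ r ∈ Icc 1 m, FbmAux.a r) - (9/64) * Real.log m| :=
          Finset.abs_sum_le_sum_abs _ _
      _ ≤ ∑ m ∈ Icc 1 (n-1), (5:ℝ) := by
          apply Finset.sum_le_sum
          intro m hm
          exact FbmAux.sum_err_le m (Finset.mem_Icc.mp hm).1
      _ ≤ 5 * (n:ℝ) := by
          rw [Finset.sum_const, Nat.card_Icc, nsmul_eq_mul]
          have : ((n - 1 + 1 - 1 : ℕ):ℝ) ≤ (n:ℝ) := by
            have : (n - 1 + 1 - 1 : ℕ) ≤ n := by omega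
            exact_mod_cast this
          nlinarith
  have hSlim : Tendsto (fun n : ℕ => S n / ((n:ℝ) * Real.log n)) atTop (nhds (9/64)) := by
    have hlow : Tendsto (fun n : ℕ =>
        (9/64) * (L n / ((n:ℝ) * Real.log n)) - 5 * (1/Real.log n))
        atTop (nhds ((9/64) * 1 - 5 * 0)) :=
      (tendsto_const_nhds.mul hLlim).sub (tendsto_const_nhds.mul hlog0)
    have hhigh : Tendsto (fun n : ℕ =>
        (9/64) * (L n / ((n:ℝ) * Real.log n)) + 5 * (1/Real.log n))
        atTop (nhds ((9/64) * 1 + 5 * 0)) :=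
      (tendsto_const_nhds.mul hLlim).add (tendsto_const_nhds.mul hlog0)
    rw [show (9:ℝ)/64 * 1 - 5 * 0 = 9/64 by norm_num] at hlow
    rw [show (9:ℝ)/64 * 1 + 5 * 0 = 9/64 by norm_num] at hhigh
    apply tendsto_of_tendsto_of_tendsto_of_le_of_le' hlow hhigh
    · filter_upwards [eventually_ge_atTop 3] with n hn
      have hpos := hnlogpos n hn
      have hn0 : (n:ℝ) ≠ 0 := Nat.cast_ne_zero.mpr (by omega)
      have h2 : (2:ℝ) ≤ (n:ℝ) := by exact_mod_cast (by omega : 2 ≤ n)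
      have hlogn : (0:ℝ) < Real.log n := Real.log_pos (by linarith)
      have hb := hSbound n (by omega)
      rw [abs_le] at hb
      have key : 5 * (n:ℝ) / ((n:ℝ) * Real.log n) = 5 * (1/Real.log n) := by
        field_simp
      have : ((9:ℝ)/64 * L n - 5 * n) / ((n:ℝ) * Real.log n) ≤ S n / ((n:ℝ) * Real.log n) :=
        div_le_div_same' (by linarith) hpos
      rw [sub_div, mul_div_assoc, key] at this
      linarith
    · filter_upwards [eventually_ge_atTop 3] with n hn
      have hpos := hnlogpos n hn
      have hn0 : (n:ℝ) ≠ 0 := Nat.cast_ne_zero.mpr (by omega)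
      have h2 : (2:ℝ) ≤ (n:ℝ) := by exact_mod_cast (by omega : 2 ≤ n)
      have hlogn : (0:ℝ) < Real.log n := Real.log_pos (by linarith)
      have hb := hSbound n (by omega)
      rw [abs_le] at hb
      have key : 5 * (n:ℝ) / ((n:ℝ) * Real.log n) = 5 * (1/Real.log n) := by
        field_simp
      have : S n / ((n:ℝ) * Real.log n) ≤ ((9:ℝ)/64 * L n + 5 * n) / ((n:ℝ) * Real.log n) :=
        div_le_div_same' (by linarith) hpos
      rw [add_div, mul_div_assoc, key] at this
      linarith
  -- final assembly
  have hfinal : Tendsto (fun n : ℕ =>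
      2 * (1/Real.log n) + 4 * (S n / ((n:ℝ) * Real.log n)))
      atTop (nhds (2 * 0 + 4 * (9/64))) :=
    (tendsto_const_nhds.mul hlog0).add (tendsto_const_nhds.mul hSlim)
  rw [show (2:ℝ) * 0 + 4 * (9/64) = 9/16 by norm_num] at hfinal
  apply Tendsto.congr' ?_ hfinal
  filter_upwards [eventually_ge_atTop 3] with n hn
  have hpos := hnlogpos n hn
  have hn0 : (n:ℝ) ≠ 0 := Nat.cast_ne_zero.mpr (by omega)
  have h2 : (2:ℝ) ≤ (n:ℝ) := by exact_mod_cast (by omega : 2 ≤ n)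
  have hlogn : (0:ℝ) < Real.log n := Real.log_pos (by linarith)
  rw [FbmAux.main_split n (by omega)]
  have hSn : ∑ j ∈ Icc 1 (n-1), ((n:ℝ) - (j:ℝ)) * FbmAux.a j = S n := rfl
  rw [hSn]
  field_simp
  ring
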